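/- There exist a sequence of probability measures ν_k on {0,1}^∞, a probability measure μ, and two sequences of positive weights (w_k) and (w'_k), each summing to 1, such that ν := ∑_k w_k ν_k predicts μ in expected average KL divergence (d_n(μ,ν) = O(log n)) while ν' := ∑_k w'_k ν_k does not: d_n(μ,ν') ≥ n − 1 for all n. -/

import Mathlib

open MeasureTheory Filter Real
open scoped ENNReal

/-- The cylinder set of all infinite sequences starting with the string `s`. -/
def cyl {X : Type*} [MeasurableSpace X] {n : ℕ} (s : Fin n → X) : Set (ℕ → X) :=
  {x | ∀ i : Fin n, x i = s i}

/-- The expected cumulative KL divergence between `μ` and `ρ` restricted to the first `n`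
observations. -/
noncomputable def dKL {X : Type*} [Fintype X] [MeasurableSpace X]
    (μ ρ : Measure (ℕ → X)) (n : ℕ) : ℝ :=
  -∑ s : Fin n → X, (μ (cyl s)).toReal * Real.logb 2 ((ρ (cyl s)).toReal / (μ (cyl s)).toReal)

lemma meas_cyl {n : ℕ} (s : Fin n → Bool) : MeasurableSet (cyl s) := by
  have : cyl s = ⋂ i : Fin n, (fun x : ℕ → Bool => x i) ⁻¹' {s i} := by
    ext x; simp [cyl]
  rw [this]
  exact MeasurableSet.iInter fun i =>
    measurable_pi_apply (i : ℕ) (measurableSet_singleton (s i))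

lemma dirac_cyl_mem {a : ℕ → Bool} {n : ℕ} {s : Fin n → Bool} (h : a ∈ cyl s) :
    Measure.dirac a (cyl s) = 1 := by
  rw [Measure.dirac_apply' a (meas_cyl s), Set.indicator_of_mem h]; rfl

lemma dirac_cyl_not_mem {a : ℕ → Bool} {n : ℕ} {s : Fin n → Bool} (h : a ∉ cyl s) :
    Measure.dirac a (cyl s) = 0 := by
  rw [Measure.dirac_apply' a (meas_cyl s), Set.indicator_of_notMem h]

lemma dKL_dirac (ρ : Measure (ℕ → Bool)) (n : ℕ) :
    dKL (Measure.dirac (fun _ => false)) ρ n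
      = - Real.logb 2 ((ρ (cyl (fun _ : Fin n => false))).toReal) := by
  unfold dKL
  rw [Finset.sum_eq_single (fun _ : Fin n => false)]
  · rw [dirac_cyl_mem (fun i => rfl)]
    simp
  · intro s _ hs
    have hmem : (fun _ : ℕ => false) ∉ cyl s := fun h => hs (funext fun i => (h i).symm)
    rw [dirac_cyl_not_mem hmem]
    simp
  · intro h; simp at h

lemma mix_cyl (w : ℕ → ℝ≥0∞) (n : ℕ) :
    (Measure.sum fun k => w k • Measure.dirac (fun i : ℕ => decide (k ≤ i)))
      (cyl (fun _ : Fin n => false)) = ∑' k, if n ≤ k then w k else 0 := by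
  rw [Measure.sum_apply _ (meas_cyl _)]
  refine tsum_congr fun k => ?_
  rw [Measure.smul_apply, smul_eq_mul]
  by_cases h : n ≤ k
  · rw [dirac_cyl_mem, if_pos h, mul_one]
    intro i
    have : ¬ (k ≤ (i : ℕ)) := by omega
    simp [this]
  · rw [dirac_cyl_not_mem, if_neg h, mul_zero]
    intro hmem
    push_neg at h
    have := hmem ⟨k, h⟩
    simp at this

lemma tail_ofReal (f : ℕ → ℝ) (hf : ∀ k, 0 ≤ f k) (n : ℕ) (a : ℝ)
    (h : HasSum (fun k => f (k + n)) a) :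
    (∑' k, if n ≤ k then ENNReal.ofReal (f k) else 0) = ENNReal.ofReal a := by
  have hinj : Function.Injective (fun k : ℕ => k + n) := fun x y h => by simpa using h
  have h2 : HasSum (fun k => if n ≤ k then f k else 0) a := by
    rw [← hinj.hasSum_iff ?_]
    · convert h using 1
      funext k
      simp [Nat.le_add_left]
    · intro x hx
      have hxn : x < n := by
        by_contra hc
        push_neg at hc
        exact hx ⟨x - n, by simp; omega⟩
      rw [if_neg (by omega)]
  have heq : ∀ k, (if n ≤ k then ENNReal.ofReal (f k) else 0)
      = ENNReal.ofReal (if n ≤ k then f k else 0) := by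
    intro k; split <;> simp
  rw [tsum_congr heq, ← ENNReal.ofReal_tsum_of_nonneg (fun k => by split <;> simp [hf k]) h2.summable,
    h2.tsum_eq]

noncomputable def f1 : ℕ → ℝ := fun k => (((k : ℝ) + 1) * ((k : ℝ) + 2))⁻¹

noncomputable def f2 : ℕ → ℝ := fun k => (2 : ℝ)⁻¹ ^ (k + 1)

lemma f1_nonneg : ∀ k, 0 ≤ f1 k := fun k => by unfold f1; positivity

lemma f2_nonneg : ∀ k, 0 ≤ f2 k := fun k => by unfold f2; positivity

lemma hasSum_f1 (n : ℕ) : HasSum (fun k => f1 (k + n)) (((n : ℝ) + 1)⁻¹) := by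
  rw [hasSum_iff_tendsto_nat_of_nonneg (fun k => f1_nonneg _)]
  have hps : ∀ m : ℕ, ∑ k ∈ Finset.range m, f1 (k + n)
      = ((n : ℝ) + 1)⁻¹ - (((m : ℝ) + (n : ℝ)) + 1)⁻¹ := by
    intro m
    induction m with
    | zero => simp
    | succ m ih =>
      rw [Finset.sum_range_succ, ih]
      unfold f1
      push_cast
      have h1 : (m : ℝ) + (n : ℝ) + 1 > 0 := by positivity
      have h2 : (m : ℝ) + (n : ℝ) + 2 > 0 := by positivity
      have h3 : ((m : ℝ) + (n : ℝ) + 1) * ((m : ℝ) + (n : ℝ) + 2) > 0 := by positivity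
      field_simp
      ring
  simp_rw [hps]
  have : Tendsto (fun m : ℕ => (((m : ℝ) + (n : ℝ)) + 1)⁻¹) atTop (nhds 0) := by
    apply Tendsto.inv_tendsto_atTop
    apply tendsto_atTop_add_const_right
    apply tendsto_atTop_add_const_right
    exact tendsto_natCast_atTop_atTop
  simpa using (tendsto_const_nhds.sub this)

lemma hasSum_f2 (n : ℕ) : HasSum (fun k => f2 (k + n)) ((2 : ℝ)⁻¹ ^ n) := by
  have hg : HasSum (fun k : ℕ => (2 : ℝ)⁻¹ ^ k) 2 := by
    have := hasSum_geometric_of_lt_one (by norm_num : (0:ℝ) ≤ 2⁻¹) (by norm_num)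
    norm_num at this
    simpa using this
  have := hg.mul_left ((2 : ℝ)⁻¹ ^ (n + 1))
  have heq : (fun k : ℕ => (2 : ℝ)⁻¹ ^ (n + 1) * (2 : ℝ)⁻¹ ^ k) = fun k => f2 (k + n) := by
    funext k; unfold f2; rw [← pow_add]; ring_nf
  rw [heq] at this
  rw [show (2 : ℝ)⁻¹ ^ n = (2 : ℝ)⁻¹ ^ (n + 1) * 2 by rw [pow_succ]; ring]
  exact this

/-- Weights matter for prediction in expected average KL divergence: there are measures `ν_k`,
a measure `μ`, and two sequences of positive weights summing to one such that the first mixture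
predicts `μ` (with `d_n(μ,ν) = O(log n)`) while the second does not (`d_n(μ,ν') ≥ n - 1`). -/
theorem stmt11 :
    ∃ (νs : ℕ → Measure (ℕ → Bool)) (μ : Measure (ℕ → Bool)) (w w' : ℕ → ℝ≥0∞),
      (∀ k, IsProbabilityMeasure (νs k)) ∧ IsProbabilityMeasure μ ∧
      (∀ k, 0 < w k) ∧ (∑' k, w k = 1) ∧ (∀ k, 0 < w' k) ∧ (∑' k, w' k = 1) ∧
      (∃ K : ℝ, ∀ n : ℕ, 2 ≤ n →
        dKL μ (Measure.sum fun k => w k • νs k) n ≤ K * Real.logb 2 n) ∧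
      (∀ n : ℕ, (n : ℝ) - 1 ≤ dKL μ (Measure.sum fun k => w' k • νs k) n) := by
  refine ⟨fun k => Measure.dirac (fun i : ℕ => decide (k ≤ i)),
    Measure.dirac (fun _ => false),
    fun k => ENNReal.ofReal (f1 k), fun k => ENNReal.ofReal (f2 k),
    fun k => inferInstance, inferInstance,
    fun k => ENNReal.ofReal_pos.mpr (by unfold f1; positivity), ?_,
    fun k => ENNReal.ofReal_pos.mpr (by unfold f2; positivity), ?_, ?_, ?_⟩
  · have h := tail_ofReal f1 f1_nonneg 0 _ (hasSum_f1 0)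
    simpa using h
  · have h := tail_ofReal f2 f2_nonneg 0 _ (hasSum_f2 0)
    simpa using h
  · refine ⟨2, fun n hn => ?_⟩
    rw [dKL_dirac, mix_cyl, tail_ofReal f1 f1_nonneg n _ (hasSum_f1 n),
      ENNReal.toReal_ofReal (by positivity), Real.logb_inv, neg_neg]
    have hn2 : (2 : ℝ) ≤ (n : ℝ) := by exact_mod_cast hn
    have h1 : ((n : ℝ) + 1) ≤ (n : ℝ) ^ 2 := by nlinarith
    calc Real.logb 2 ((n : ℝ) + 1) ≤ Real.logb 2 ((n : ℝ) ^ 2) := by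
          exact Real.logb_le_logb_of_le (by norm_num) (by positivity) h1
      _ = 2 * Real.logb 2 (n : ℝ) := by
          rw [Real.logb_pow]; push_cast; ring
  · intro n
    rw [dKL_dirac, mix_cyl, tail_ofReal f2 f2_nonneg n _ (hasSum_f2 n),
      ENNReal.toReal_ofReal (by positivity), Real.logb_pow, Real.logb_inv,
      Real.logb_self_eq_one (by norm_num)]
    linarith
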